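/- Let H_k be any graph on k ≥ 1 vertices, n and i integers with 2 ≤ i ≤ (n−k)/2, and define G(i, n−k−i) = K_i ∨ H_k ∨ K_{n−k−i} (a graph on n vertices where the clique K_i and the clique K_{n−k−i} are each completely joined to H_k but not to each other). Then SO(G(i, n−k−i)) < SO(G(1, n−k−1)). -/

import Mathlib

/-- The Sombor index of a finite simple graph:
`SO(G) = Σ_{uv ∈ E(G)} √(d(u)² + d(v)²)`. -/
noncomputable def somborIndex {V : Type*} [Fintype V] (G : SimpleGraph V) : ℝ := by
  classical
  exact ∑ e ∈ G.edgeFinset,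
    Sym2.lift ⟨fun u v => Real.sqrt ((G.degree u : ℝ)^2 + (G.degree v : ℝ)^2),
      fun u v => by simp [add_comm]⟩ e

/-- The triple join A ∨ H ∨ B: all edges between A and H and between H and B are
added, but none between A and B. -/
def tripleJoin {α β γ : Type*} (A : SimpleGraph α) (H : SimpleGraph β) (B : SimpleGraph γ) :
    SimpleGraph (α ⊕ β ⊕ γ) where
  Adj u v :=
    match u, v with
    | .inl x, .inl y => A.Adj x y
    | .inl _, .inr (.inl _) => True
    | .inr (.inl _), .inl _ => True
    | .inr (.inl x), .inr (.inl y) => H.Adj x y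
    | .inr (.inl _), .inr (.inr _) => True
    | .inr (.inr _), .inr (.inl _) => True
    | .inr (.inr x), .inr (.inr y) => B.Adj x y
    | _, _ => False
  symm := by
    refine ⟨?_⟩
    rintro (x | x | x) (y | y | y) h <;> simp_all <;>
      first | exact h.symm | exact h
  loopless := by
    refine ⟨?_⟩
    rintro (x | x | x) h <;> simp_all

section SomborAux
open Finset

section TJ
variable {α β γ : Type*} {A : SimpleGraph α} {H : SimpleGraph β} {B : SimpleGraph γ}

@[simp] lemma tj_ll {x y : α} : (tripleJoin A H B).Adj (.inl x) (.inl y) ↔ A.Adj x y := Iff.rfl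
@[simp] lemma tj_lm {x : α} {v : β} : (tripleJoin A H B).Adj (.inl x) (.inr (.inl v)) := trivial
@[simp] lemma tj_ml {x : α} {v : β} : (tripleJoin A H B).Adj (.inr (.inl v)) (.inl x) := trivial
@[simp] lemma tj_mm {v w : β} : (tripleJoin A H B).Adj (.inr (.inl v)) (.inr (.inl w)) ↔ H.Adj v w := Iff.rfl
@[simp] lemma tj_mr {v : β} {y : γ} : (tripleJoin A H B).Adj (.inr (.inl v)) (.inr (.inr y)) := trivial
@[simp] lemma tj_rm {v : β} {y : γ} : (tripleJoin A H B).Adj (.inr (.inr y)) (.inr (.inl v)) := trivial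
@[simp] lemma tj_rr {x y : γ} : (tripleJoin A H B).Adj (.inr (.inr x)) (.inr (.inr y)) ↔ B.Adj x y := Iff.rfl
@[simp] lemma tj_lr {x : α} {y : γ} : ¬ (tripleJoin A H B).Adj (.inl x) (.inr (.inr y)) := fun h => h
@[simp] lemma tj_rl {x : α} {y : γ} : ¬ (tripleJoin A H B).Adj (.inr (.inr y)) (.inl x) := fun h => h

end TJ

section SomborHalf
variable {V : Type*} [Fintype V] [DecidableEq V]

lemma sum_edgeFinset_eq_half (G : SimpleGraph V) [DecidableRel G.Adj] (f : Sym2 V → ℝ) :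
    ∑ e ∈ G.edgeFinset, f e = (1/2) * ∑ d : G.Dart, f d.edge := by
  have h : ∑ d : G.Dart, f d.edge
      = ∑ e ∈ G.edgeFinset, ∑ d ∈ ({d : G.Dart | d.edge = e} : Finset _), f d.edge := by
    exact (sum_fiberwise_of_maps_to (fun d _ => by
      rw [SimpleGraph.mem_edgeFinset]; exact d.edge_mem) _).symm
  have h2 : ∀ e ∈ G.edgeFinset,
      ∑ d ∈ ({d : G.Dart | d.edge = e} : Finset _), f d.edge = 2 * f e := by
    intro e he
    calc ∑ d ∈ ({d : G.Dart | d.edge = e} : Finset _), f d.edge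
        = ∑ _d ∈ ({d : G.Dart | d.edge = e} : Finset _), f e := by
          apply Finset.sum_congr rfl; intro d hd
          simp only [Finset.mem_filter] at hd
          rw [hd.2]
      _ = 2 * f e := by
          rw [Finset.sum_const, G.dart_edge_fiber_card e (SimpleGraph.mem_edgeFinset.mp he)]
          simp [mul_comm]
  rw [h, Finset.sum_congr rfl h2, Finset.mul_sum]
  apply Finset.sum_congr rfl
  intro e _; ring

def dartEquivSigma (G : SimpleGraph V) : G.Dart ≃ Σ v, G.neighborSet v where
  toFun := fun d => ⟨d.fst, d.snd, d.adj⟩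
  invFun := fun s => ⟨(s.1, s.2), s.2.2⟩
  left_inv := fun d => rfl
  right_inv := fun s => rfl

lemma sum_dart_eq (G : SimpleGraph V) [DecidableRel G.Adj] (g : V → V → ℝ) :
    ∑ d : G.Dart, g d.fst d.snd
      = ∑ u, ∑ v, if G.Adj u v then g u v else 0 := by
  rw [show ∑ d : G.Dart, g d.fst d.snd = ∑ s : Σ v, G.neighborSet v, g s.1 s.2 from
    Fintype.sum_equiv (dartEquivSigma G) _ _ (fun d => rfl)]
  rw [← Finset.univ_sigma_univ, Finset.sum_sigma]
  apply Finset.sum_congr rfl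
  intro u _
  rw [← Finset.sum_filter]
  rw [Finset.sum_set_coe (f := fun v => g u v) (s := G.neighborSet u)]
  apply Finset.sum_congr _ (fun _ _ => rfl)
  ext v; simp

lemma somborIndex_eq (G : SimpleGraph V) [DecidableRel G.Adj] :
    somborIndex G = (1/2) * ∑ u, ∑ v, if G.Adj u v
      then Real.sqrt ((G.degree u : ℝ)^2 + (G.degree v : ℝ)^2) else 0 := by
  classical
  rw [← sum_dart_eq G (fun u v => Real.sqrt ((G.degree u : ℝ)^2 + (G.degree v : ℝ)^2))]
  unfold somborIndex
  rw [show (∑ d : G.Dart, Real.sqrt ((G.degree d.fst : ℝ)^2 + (G.degree d.snd : ℝ)^2))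
      = ∑ d : G.Dart, Sym2.lift ⟨fun u v => Real.sqrt ((G.degree u : ℝ)^2 + (G.degree v : ℝ)^2),
        fun u v => by simp [add_comm]⟩ d.edge from Finset.sum_congr rfl (fun d _ => rfl)]
  rw [← sum_edgeFinset_eq_half]
  congr!


end SomborHalf

lemma sum_ite_ne {m : ℕ} (x : Fin m) : (∑ y : Fin m, if x = y then 0 else 1) = m - 1 := by
  have h : (univ.filter fun y => ¬ x = y) = univ.erase x := by
    ext y; simp [eq_comm (a := x)]
  rw [Finset.sum_ite, Finset.sum_const_zero, zero_add, Finset.sum_const, smul_eq_mul, mul_one,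
    h, Finset.card_erase_of_mem (mem_univ x), card_univ, Fintype.card_fin]

lemma sum_ite_ne_real {m : ℕ} (x : Fin m) (c : ℝ) :
    (∑ y : Fin m, if x ≠ y then c else 0) = ((m-1 : ℕ):ℝ) * c := by
  rw [Finset.sum_ite, Finset.sum_const_zero, add_zero, Finset.sum_const, nsmul_eq_mul]
  have h : (univ.filter fun y => x ≠ y) = univ.erase x := by
    ext y; simp [eq_comm (a := x), Ne]
  rw [h, Finset.card_erase_of_mem (mem_univ x), card_univ, Fintype.card_fin]

lemma degree_eq_sum {V : Type*} [Fintype V] (G : SimpleGraph V) [DecidableRel G.Adj] (v : V) :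
    G.degree v = ∑ w, if G.Adj v w then 1 else 0 := by
  rw [SimpleGraph.degree, SimpleGraph.neighborFinset_eq_filter, Finset.card_filter]

lemma degree_congr {V : Type*} [Fintype V] (G : SimpleGraph V) (v : V)
    (i1 i2 : Fintype (G.neighborSet v)) :
    @SimpleGraph.degree _ G v i1 = @SimpleGraph.degree _ G v i2 := by
  cases Subsingleton.elim i1 i2; rfl

variable {a b k : ℕ} (H : SimpleGraph (Fin k))

lemma degA (x : Fin a)
    {inst : Fintype ((tripleJoin (⊤ : SimpleGraph (Fin a)) H (⊤ : SimpleGraph (Fin b))).neighborSet (.inl x))} :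
    @SimpleGraph.degree _ (tripleJoin (⊤ : SimpleGraph (Fin a)) H (⊤ : SimpleGraph (Fin b)))
      (.inl x) inst = (a - 1) + k := by
  classical
  rw [degree_congr _ _ inst (SimpleGraph.neighborSetFintype _ _), degree_eq_sum, Fintype.sum_sum_type,
    Fintype.sum_sum_type]
  simp [sum_ite_ne]

lemma degB (y : Fin b)
    {inst : Fintype ((tripleJoin (⊤ : SimpleGraph (Fin a)) H (⊤ : SimpleGraph (Fin b))).neighborSet (.inr (.inr y)))} :
    @SimpleGraph.degree _ (tripleJoin (⊤ : SimpleGraph (Fin a)) H (⊤ : SimpleGraph (Fin b)))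
      (.inr (.inr y)) inst = (b - 1) + k := by
  classical
  rw [degree_congr _ _ inst (SimpleGraph.neighborSetFintype _ _), degree_eq_sum, Fintype.sum_sum_type,
    Fintype.sum_sum_type]
  simp [sum_ite_ne]
  omega

lemma degH (v : Fin k)
    {inst : Fintype ((tripleJoin (⊤ : SimpleGraph (Fin a)) H (⊤ : SimpleGraph (Fin b))).neighborSet (.inr (.inl v)))}
    {instH : Fintype (H.neighborSet v)} :
    @SimpleGraph.degree _ (tripleJoin (⊤ : SimpleGraph (Fin a)) H (⊤ : SimpleGraph (Fin b)))
      (.inr (.inl v)) inst = @SimpleGraph.degree _ H v instH + a + b := by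
  classical
  rw [degree_congr _ _ inst (SimpleGraph.neighborSetFintype _ _), degree_congr _ _ instH (SimpleGraph.neighborSetFintype _ _),
    degree_eq_sum, Fintype.sum_sum_type, Fintype.sum_sum_type, degree_eq_sum]
  simp
  omega


open Classical in
lemma SO_formula (ha : 1 ≤ a) (hb : 1 ≤ b) :
    somborIndex (tripleJoin (⊤ : SimpleGraph (Fin a)) H (⊤ : SimpleGraph (Fin b)))
      = (a*(a-1)/2 : ℝ) * Real.sqrt (((a-1+k : ℕ):ℝ)^2 + ((a-1+k : ℕ):ℝ)^2)
      + (b*(b-1)/2 : ℝ) * Real.sqrt (((b-1+k : ℕ):ℝ)^2 + ((b-1+k : ℕ):ℝ)^2)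
      + a * ∑ v, Real.sqrt (((a-1+k : ℕ):ℝ)^2 + ((H.degree v + a + b : ℕ):ℝ)^2)
      + b * ∑ v, Real.sqrt (((b-1+k : ℕ):ℝ)^2 + ((H.degree v + a + b : ℕ):ℝ)^2)
      + (1/2) * ∑ v, ∑ w, (if H.Adj v w then
          Real.sqrt (((H.degree v + a + b : ℕ):ℝ)^2 + ((H.degree w + a + b : ℕ):ℝ)^2) else 0) := by
  classical
  rw [somborIndex_eq]
  simp only [Fintype.sum_sum_type]
  simp only [degA, degB, degH, tj_ll, tj_lm, tj_ml, tj_mm, tj_mr, tj_rm, tj_rr, tj_lr, tj_rl,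
    SimpleGraph.top_adj, if_true, if_false]
  simp only [sum_ite_ne_real, Finset.sum_const_zero, Finset.sum_const, card_univ,
    Fintype.card_fin, smul_eq_mul, mul_zero, add_zero, zero_add, Finset.sum_add_distrib,
    ← Finset.mul_sum]
  have hsw : ∀ v : Fin k, Real.sqrt (((H.degree v + a + b : ℕ):ℝ)^2 + ((a-1+k : ℕ):ℝ)^2)
      = Real.sqrt (((a-1+k : ℕ):ℝ)^2 + ((H.degree v + a + b : ℕ):ℝ)^2) := fun v => by
    rw [add_comm (((H.degree v + a + b : ℕ):ℝ)^2)]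
  have hsw2 : ∀ v : Fin k, Real.sqrt (((H.degree v + a + b : ℕ):ℝ)^2 + ((b-1+k : ℕ):ℝ)^2)
      = Real.sqrt (((b-1+k : ℕ):ℝ)^2 + ((H.degree v + a + b : ℕ):ℝ)^2) := fun v => by
    rw [add_comm (((H.degree v + a + b : ℕ):ℝ)^2)]
  simp only [hsw, hsw2, nsmul_eq_mul, ← Finset.mul_sum]
  generalize (∑ x : Fin k, Real.sqrt (((a - 1 + k : ℕ):ℝ) ^ 2 + ((H.degree x + a + b : ℕ):ℝ) ^ 2)) = S1
  generalize (∑ x : Fin k, Real.sqrt (((b - 1 + k : ℕ):ℝ) ^ 2 + ((H.degree x + a + b : ℕ):ℝ) ^ 2)) = S2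
  generalize (∑ x : Fin k, ∑ y : Fin k, if H.Adj x y then
    Real.sqrt (((H.degree x + a + b : ℕ):ℝ) ^ 2 + ((H.degree y + a + b : ℕ):ℝ) ^ 2) else 0) = T
  generalize Real.sqrt (((a - 1 + k : ℕ):ℝ) ^ 2 + ((a - 1 + k : ℕ):ℝ) ^ 2) = s1
  generalize Real.sqrt (((b - 1 + k : ℕ):ℝ) ^ 2 + ((b - 1 + k : ℕ):ℝ) ^ 2) = s2
  push_cast [Nat.cast_sub ha, Nat.cast_sub hb]
  ring


/-- 2D Minkowski inequality via complex absolute value. -/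
lemma sqrt_minkowski (u1 v1 u2 v2 : ℝ) :
    Real.sqrt ((u1+u2)^2 + (v1+v2)^2) ≤ Real.sqrt (u1^2+v1^2) + Real.sqrt (u2^2+v2^2) := by
  have h := norm_add_le (⟨u1, v1⟩ : ℂ) ⟨u2, v2⟩
  simpa [Complex.norm_def, Complex.normSq_apply, Complex.add_re, Complex.add_im, sq] using h

lemma sqrt_mul_self' (t u : ℝ) (ht : 0 ≤ t) : t * Real.sqrt u = Real.sqrt (t^2 * u) := by
  rw [Real.sqrt_mul (by positivity), Real.sqrt_sq ht]

/-- ψ(t) = t √((t+c)² + e²), strict convex combination inequality. -/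
lemma psi_comb (c e x y l m : ℝ) (hc : 0 ≤ c) (hx : 0 ≤ x) (hy : 0 ≤ y) (hxy : x ≠ y)
    (hl : 0 < l) (hm : 0 < m) (hlm : l + m = 1) :
    (l*x+m*y) * Real.sqrt ((l*x+m*y+c)^2 + e^2)
      < l * (x * Real.sqrt ((x+c)^2 + e^2)) + m * (y * Real.sqrt ((y+c)^2 + e^2)) := by
  set z := l*x + m*y with hz
  have hz0 : 0 ≤ z := by positivity
  have key : ∀ t : ℝ, 0 ≤ t → t * Real.sqrt ((t+c)^2 + e^2)
      = Real.sqrt ((t^2 + c*t)^2 + (e*t)^2) := by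
    intro t ht
    rw [sqrt_mul_self' _ _ ht]
    ring_nf
  rw [key z hz0, key x hx, key y hy]
  have hsq : z^2 < l*x^2 + m*y^2 := by
    have h0 : 0 < (x-y)^2 := pow_two_pos_of_ne_zero (sub_ne_zero.2 hxy)
    nlinarith [mul_pos (mul_pos hl hm) h0]
  have hP : z^2 + c*z < l*(x^2+c*x) + m*(y^2+c*y) := by
    have : c*z = l*(c*x) + m*(c*y) := by rw [hz]; ring
    nlinarith [hsq]
  have hz2 : 0 ≤ z^2 + c*z := by positivity
  have step1 : Real.sqrt ((z^2 + c*z)^2 + (e*z)^2)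
      < Real.sqrt ((l*(x^2+c*x) + m*(y^2+c*y))^2 + (e*z)^2) := by
    apply Real.sqrt_lt_sqrt (by positivity)
    have : (z^2+c*z)^2 < (l*(x^2+c*x) + m*(y^2+c*y))^2 := by
      apply sq_lt_sq' _ hP
      nlinarith [hz2, hP]
    linarith
  have step2 : Real.sqrt ((l*(x^2+c*x) + m*(y^2+c*y))^2 + (e*z)^2)
      ≤ l * Real.sqrt ((x^2+c*x)^2 + (e*x)^2) + m * Real.sqrt ((y^2+c*y)^2 + (e*y)^2) := by
    have hez : e*z = l*(e*x) + m*(e*y) := by rw [hz]; ring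
    rw [hez]
    calc Real.sqrt ((l*(x^2+c*x) + m*(y^2+c*y))^2 + (l*(e*x) + m*(e*y))^2)
        ≤ Real.sqrt ((l*(x^2+c*x))^2 + (l*(e*x))^2)
          + Real.sqrt ((m*(y^2+c*y))^2 + (m*(e*y))^2) := sqrt_minkowski _ _ _ _
      _ = l * Real.sqrt ((x^2+c*x)^2 + (e*x)^2) + m * Real.sqrt ((y^2+c*y)^2 + (e*y)^2) := by
          rw [sqrt_mul_self' l _ hl.le, sqrt_mul_self' m _ hm.le]
          ring_nf
  linarith

/-- Two-point strict inequality for ψ, stated with the `t-1+κ` shape. -/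
lemma psi_two_point (κ e x a b y : ℝ) (hκ : 1 ≤ κ) (hx : 0 ≤ x) (hxa : x < a)
    (hab : a ≤ b) (hby : b < y) (hsum : a + b = x + y) :
    a * Real.sqrt ((a-1+κ)^2 + e^2) + b * Real.sqrt ((b-1+κ)^2 + e^2)
      < x * Real.sqrt ((x-1+κ)^2 + e^2) + y * Real.sqrt ((y-1+κ)^2 + e^2) := by
  set c := κ - 1 with hc
  have hc0 : 0 ≤ c := by linarith
  have hxy : x ≠ y := by intro h; rw [h] at hxa; linarith
  have hyx : 0 < y - x := by linarith
  set l := (y - a)/(y - x) with hl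
  set m := (a - x)/(y - x) with hm
  have hl0 : 0 < l := by apply div_pos; linarith; linarith
  have hm0 : 0 < m := by apply div_pos; linarith; linarith
  have hlm : l + m = 1 := by rw [hl, hm]; field_simp; ring
  have ha' : a = l*x + m*y := by rw [hl, hm]; field_simp; ring
  have hb' : b = m*x + l*y := by
    rw [hl, hm]; field_simp; linear_combination (y - x) * hsum
  have h1 := psi_comb c e x y l m hc0 hx (by linarith) hxy hl0 hm0 hlm
  have h2 := psi_comb c e x y m l hc0 hx (by linarith) hxy hm0 hl0 (by linarith)
  have e1 : ∀ t : ℝ, t - 1 + κ = t + c := by intro t; rw [hc]; ring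
  rw [e1 a, e1 b, e1 x, e1 y, ha', hb']
  calc (l*x+m*y) * Real.sqrt ((l*x+m*y+c)^2 + e^2) + (m*x+l*y) * Real.sqrt ((m*x+l*y+c)^2 + e^2)
      < (l * (x * Real.sqrt ((x+c)^2 + e^2)) + m * (y * Real.sqrt ((y+c)^2 + e^2)))
        + (m * (x * Real.sqrt ((x+c)^2 + e^2)) + l * (y * Real.sqrt ((y+c)^2 + e^2))) := by
        exact add_lt_add h1 h2
    _ = x * Real.sqrt ((x+c)^2 + e^2) + y * Real.sqrt ((y+c)^2 + e^2) := by
        linear_combination (x * Real.sqrt ((x+c)^2 + e^2) + y * Real.sqrt ((y+c)^2 + e^2)) * hlm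

/-- clique polynomial inequality -/
lemma clique_poly (κ a b : ℝ) (hκ : 1 ≤ κ) (ha : 2 ≤ a) (hab : a ≤ b) :
    a*(a-1)*(a-1+κ) + b*(b-1)*(b-1+κ) ≤ (a+b-1)*(a+b-2)*(a+b-2+κ) := by
  nlinarith [mul_nonneg (mul_nonneg (sub_nonneg.2 ha) (by linarith : (0:ℝ) ≤ b - 2))
      (by linarith : (0:ℝ) ≤ a + b - 2 + κ),
    mul_nonneg (mul_nonneg (by linarith : (0:ℝ) ≤ a - 1) (by linarith : (0:ℝ) ≤ b - 1))
      (by linarith : (0:ℝ) ≤ a + b - 2 + κ),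
    mul_nonneg (by linarith : (0:ℝ) ≤ a - 1) (by linarith : (0:ℝ) ≤ b - 1),
    mul_nonneg (mul_nonneg (by linarith : (0:ℝ) ≤ a - 1) (by linarith : (0:ℝ) ≤ b - 1))
      (by linarith : (0:ℝ) ≤ κ - 1)]


/-- Clique-part inequality with the √2 factor. -/
lemma clique_sqrt (κ a b y : ℝ) (hκ : 1 ≤ κ) (ha : 2 ≤ a) (hab : a ≤ b)
    (hy : y = a + b - 1) :
    a*(a-1)/2 * Real.sqrt ((a-1+κ)^2+(a-1+κ)^2) + b*(b-1)/2 * Real.sqrt ((b-1+κ)^2+(b-1+κ)^2)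
      ≤ 1*(1-1)/2 * Real.sqrt ((1-1+κ)^2+(1-1+κ)^2)
        + y*(y-1)/2 * Real.sqrt ((y-1+κ)^2+(y-1+κ)^2) := by
  have hsq : ∀ t : ℝ, 0 ≤ t → Real.sqrt (t^2+t^2) = t * Real.sqrt 2 := by
    intro t ht
    rw [show t^2+t^2 = t^2*2 by ring, Real.sqrt_mul (sq_nonneg t), Real.sqrt_sq ht]
  subst hy
  rw [hsq _ (by linarith), hsq _ (by linarith), hsq _ (by linarith), hsq _ (by linarith)]
  have hpoly := clique_poly κ a b hκ ha hab
  nlinarith [hpoly, Real.sqrt_nonneg 2]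


end SomborAux

/-- For G(i, n−k−i) = K_i ∨ H_k ∨ K_{n−k−i} with 2 ≤ i ≤ (n−k)/2, one has
SO(G(i, n−k−i)) < SO(G(1, n−k−1)). -/
theorem somborIndex_tripleJoin_lt (n k i : ℕ) (hk : 1 ≤ k)
    (H : SimpleGraph (Fin k)) (hi : 2 ≤ i) (hin : 2 * i + k ≤ n) :
    somborIndex (tripleJoin (⊤ : SimpleGraph (Fin i)) H (⊤ : SimpleGraph (Fin (n - k - i)))) <
      somborIndex (tripleJoin (⊤ : SimpleGraph (Fin 1)) H
        (⊤ : SimpleGraph (Fin (n - k - 1)))) := by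
  classical
  have hb : 1 ≤ n - k - i := by omega
  have hb1 : 1 ≤ n - k - 1 := by omega
  have hib : i ≤ n - k - i := by omega
  have hbb1 : n - k - i < n - k - 1 := by omega
  rw [SO_formula H (by omega : 1 ≤ i) hb, SO_formula H le_rfl hb1]
  have hD : ∀ v : Fin k, H.degree v + i + (n - k - i) = H.degree v + 1 + (n - k - 1) :=
    fun v => by omega
  have c1 : ((i - 1 + k : ℕ):ℝ) = (i:ℝ) - 1 + (k:ℝ) := by
    rw [Nat.cast_add, Nat.cast_sub (by omega : 1 ≤ i), Nat.cast_one]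
  have c2 : ((n - k - i - 1 + k : ℕ):ℝ) = ((n - k - i : ℕ):ℝ) - 1 + (k:ℝ) := by
    rw [Nat.cast_add, Nat.cast_sub hb, Nat.cast_one]
  have c3 : ((n - k - 1 - 1 + k : ℕ):ℝ) = ((n - k - 1 : ℕ):ℝ) - 1 + (k:ℝ) := by
    rw [Nat.cast_add, Nat.cast_sub hb1, Nat.cast_one]
  have c4 : ((1 - 1 + k : ℕ):ℝ) = (1:ℝ) - 1 + (k:ℝ) := by norm_num
  simp only [hD, c1, c2, c3, c4, Nat.cast_one]
  have key : ∀ v : Fin k,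
      (i:ℝ) * Real.sqrt (((i:ℝ) - 1 + k)^2 + ((H.degree v + 1 + (n - k - 1) : ℕ):ℝ)^2)
        + ((n - k - i : ℕ):ℝ) * Real.sqrt ((((n - k - i : ℕ):ℝ) - 1 + k)^2
            + ((H.degree v + 1 + (n - k - 1) : ℕ):ℝ)^2)
      < 1 * Real.sqrt (((1:ℝ) - 1 + k)^2 + ((H.degree v + 1 + (n - k - 1) : ℕ):ℝ)^2)
        + ((n - k - 1 : ℕ):ℝ) * Real.sqrt ((((n - k - 1 : ℕ):ℝ) - 1 + k)^2
            + ((H.degree v + 1 + (n - k - 1) : ℕ):ℝ)^2) := by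
    intro v
    apply psi_two_point
    · exact_mod_cast hk
    · norm_num
    · exact_mod_cast hi.trans_lt' one_lt_two |>.trans_le le_rfl
    · exact_mod_cast hib
    · exact_mod_cast hbb1
    · have : i + (n - k - i) = 1 + (n - k - 1) := by omega
      exact_mod_cast congrArg (Nat.cast : ℕ → ℝ) this
  have hne : Nonempty (Fin k) := ⟨⟨0, hk⟩⟩
  have h1 : (i:ℝ) * (∑ v, Real.sqrt (((i:ℝ) - 1 + k)^2
          + ((H.degree v + 1 + (n - k - 1) : ℕ):ℝ)^2))
        + ((n - k - i : ℕ):ℝ) * (∑ v, Real.sqrt ((((n - k - i : ℕ):ℝ) - 1 + k)^2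
          + ((H.degree v + 1 + (n - k - 1) : ℕ):ℝ)^2))
      < 1 * (∑ v, Real.sqrt (((1:ℝ) - 1 + k)^2 + ((H.degree v + 1 + (n - k - 1) : ℕ):ℝ)^2))
        + ((n - k - 1 : ℕ):ℝ) * (∑ v, Real.sqrt ((((n - k - 1 : ℕ):ℝ) - 1 + k)^2
          + ((H.degree v + 1 + (n - k - 1) : ℕ):ℝ)^2)) := by
    rw [Finset.mul_sum, Finset.mul_sum, Finset.mul_sum, Finset.mul_sum,
      ← Finset.sum_add_distrib, ← Finset.sum_add_distrib]
    exact Finset.sum_lt_sum_of_nonempty Finset.univ_nonempty (fun v _ => key v)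
  have h2 := clique_sqrt (k:ℝ) (i:ℝ) ((n - k - i : ℕ):ℝ) ((n - k - 1 : ℕ):ℝ)
    (by exact_mod_cast hk) (by exact_mod_cast hi) (by exact_mod_cast hib)
    (by
      have : (1 : ℕ) + (n - k - 1) = i + (n - k - i) := by omega
      have := congrArg (Nat.cast : ℕ → ℝ) this
      push_cast at this
      linarith)
  set Ev : Fin k → ℝ := fun v => ((H.degree v + 1 + (n - k - 1) : ℕ):ℝ) with hEv
  set q1 : ℝ := Real.sqrt (((i:ℝ) - 1 + k)^2 + ((i:ℝ) - 1 + k)^2) with hq1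
  set q2 : ℝ := Real.sqrt ((((n - k - i : ℕ):ℝ) - 1 + k)^2 + (((n - k - i : ℕ):ℝ) - 1 + k)^2) with hq2
  set q3 : ℝ := Real.sqrt (((1:ℝ) - 1 + k)^2 + ((1:ℝ) - 1 + k)^2) with hq3
  set q4 : ℝ := Real.sqrt ((((n - k - 1 : ℕ):ℝ) - 1 + k)^2 + (((n - k - 1 : ℕ):ℝ) - 1 + k)^2) with hq4
  set S1 : ℝ := ∑ v, Real.sqrt (((i:ℝ) - 1 + k)^2 + Ev v^2) with hS1
  set S2 : ℝ := ∑ v, Real.sqrt ((((n - k - i : ℕ):ℝ) - 1 + k)^2 + Ev v^2) with hS2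
  set S3 : ℝ := ∑ v, Real.sqrt (((1:ℝ) - 1 + k)^2 + Ev v^2) with hS3
  set S4 : ℝ := ∑ v, Real.sqrt ((((n - k - 1 : ℕ):ℝ) - 1 + k)^2 + Ev v^2) with hS4
  set T : ℝ := ∑ v, ∑ w, (if H.Adj v w then Real.sqrt (Ev v^2 + Ev w^2) else 0) with hT
  linarith [h1, h2]
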